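/- Under the hypotheses f₁, f₂ ≥ 0, the discrete functional J_h(v) = -(1/2)(L_h v, v) + (f₁, v∨0) - (f₂, v∧0) - (L_h g, v), defined on grid functions v vanishing at the boundary points (with L_h the three-point discrete Laplacian extended by the boundary data g), is bounded below on ℝ^{N-1}. -/

import Mathlib

noncomputable def Lh (h : ℝ) (v : ℕ → ℝ) (i : ℕ) : ℝ :=
  (v (i - 1) - 2 * v i + v (i + 1)) / h ^ 2

noncomputable def Jh (N : ℕ) (h : ℝ) (f₁ f₂ g : ℕ → ℝ) (v : ℕ → ℝ) : ℝ :=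
  -(1 / 2) * ∑ i ∈ Finset.Icc 1 (N - 1), Lh h v i * v i
    + ∑ i ∈ Finset.Icc 1 (N - 1), f₁ i * max (v i) 0
    - ∑ i ∈ Finset.Icc 1 (N - 1), f₂ i * min (v i) 0
    - ∑ i ∈ Finset.Icc 1 (N - 1), Lh h g i * v i

lemma sbp (v : ℕ → ℝ) (N : ℕ) (hN : 1 ≤ N) :
    ∑ i ∈ Finset.Icc 1 (N - 1), (v (i - 1) - 2 * v i + v (i + 1)) * v i
      = -∑ i ∈ Finset.range N, (v (i + 1) - v i) ^ 2
        - (v 1 - v 0) * v 0 + (v N - v (N - 1)) * v N := by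
  induction N, hN using Nat.le_induction with
  | base => simp; ring
  | succ n hn IH =>
    rcases Nat.exists_eq_succ_of_ne_zero (by omega : n ≠ 0) with ⟨m, rfl⟩
    simp only [Nat.succ_eq_add_one, Nat.add_sub_cancel] at IH ⊢
    rw [Finset.sum_Icc_succ_top (by omega), Finset.sum_range_succ]
    simp only [Nat.add_sub_cancel]
    rw [IH]
    ring

lemma vbound (v : ℕ → ℝ) (hv0 : v 0 = 0) (N i : ℕ) (hi : i ≤ N) :
    |v i| ≤ ∑ j ∈ Finset.range N, |v (j + 1) - v j| := by
  have h1 : v i = ∑ j ∈ Finset.range i, (v (j + 1) - v j) := by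
    rw [Finset.sum_range_sub, hv0, sub_zero]
  rw [h1]
  calc |∑ j ∈ Finset.range i, (v (j + 1) - v j)|
      ≤ ∑ j ∈ Finset.range i, |v (j + 1) - v j| := Finset.abs_sum_le_sum_abs _ _
    _ ≤ ∑ j ∈ Finset.range N, |v (j + 1) - v j| :=
        Finset.sum_le_sum_of_subset_of_nonneg (Finset.range_subset_range.2 hi)
          (fun _ _ _ => abs_nonneg _)

theorem stmt_17 (N : ℕ) (hN : 1 ≤ N) (h : ℝ) (hh : 0 < h)
    (f₁ f₂ g : ℕ → ℝ) (hf₁ : ∀ i, 0 ≤ f₁ i) (hf₂ : ∀ i, 0 ≤ f₂ i) :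
    ∃ m : ℝ, ∀ v : ℕ → ℝ, v 0 = 0 → v N = 0 → m ≤ Jh N h f₁ f₂ g v := by
  set C := ∑ i ∈ Finset.Icc 1 (N - 1), |Lh h g i| with hCdef
  have hC0 : 0 ≤ C := Finset.sum_nonneg fun i _ => abs_nonneg _
  set ε := (C + 1) * h ^ 2 with hεdef
  have hε0 : 0 < ε := by positivity
  refine ⟨-(C * N * ε / 2), fun v hv0 hvN => ?_⟩
  set s := ∑ i ∈ Finset.range N, (v (i + 1) - v i) ^ 2 with hsdef
  have hs0 : 0 ≤ s := Finset.sum_nonneg fun i _ => sq_nonneg _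
  set T := ∑ j ∈ Finset.range N, |v (j + 1) - v j| with hTdef
  have hquad : -(1 / 2) * ∑ i ∈ Finset.Icc 1 (N - 1), Lh h v i * v i
      = s / (2 * h ^ 2) := by
    have hid := sbp v N hN
    rw [hv0, hvN] at hid
    have : ∑ i ∈ Finset.Icc 1 (N - 1), Lh h v i * v i
        = (∑ i ∈ Finset.Icc 1 (N - 1), (v (i - 1) - 2 * v i + v (i + 1)) * v i) / h ^ 2 := by
      rw [Finset.sum_div]
      refine Finset.sum_congr rfl fun i _ => ?_
      simp [Lh]; ring
    rw [this, hid]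
    field_simp
    rw [hsdef]; ring
  have h1 : 0 ≤ ∑ i ∈ Finset.Icc 1 (N - 1), f₁ i * max (v i) 0 :=
    Finset.sum_nonneg fun i _ => mul_nonneg (hf₁ i) (le_max_right _ _)
  have h2 : ∑ i ∈ Finset.Icc 1 (N - 1), f₂ i * min (v i) 0 ≤ 0 :=
    Finset.sum_nonpos fun i _ =>
      mul_nonpos_of_nonneg_of_nonpos (hf₂ i) (min_le_right _ _)
  have hT0 : 0 ≤ T := Finset.sum_nonneg fun i _ => abs_nonneg _
  have h3 : |∑ i ∈ Finset.Icc 1 (N - 1), Lh h g i * v i| ≤ C * T := by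
    calc |∑ i ∈ Finset.Icc 1 (N - 1), Lh h g i * v i|
        ≤ ∑ i ∈ Finset.Icc 1 (N - 1), |Lh h g i * v i| := Finset.abs_sum_le_sum_abs _ _
      _ ≤ ∑ i ∈ Finset.Icc 1 (N - 1), |Lh h g i| * T := by
          refine Finset.sum_le_sum fun i hi => ?_
          rw [abs_mul]
          exact mul_le_mul_of_nonneg_left
            (vbound v hv0 N i (le_trans (Finset.mem_Icc.1 hi).2 (Nat.sub_le N 1)))
            (abs_nonneg _)
      _ = C * T := (Finset.sum_mul _ _ _).symm
  have h4 : T ≤ s / (2 * ε) + N * ε / 2 := by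
    have : T ≤ ∑ j ∈ Finset.range N, ((v (j + 1) - v j) ^ 2 / (2 * ε) + ε / 2) := by
      refine Finset.sum_le_sum fun j _ => ?_
      have hsq := sq_nonneg (|v (j + 1) - v j| - ε)
      rw [sub_sq, sq_abs] at hsq
      rw [div_add_div _ _ (by positivity) (by norm_num), le_div_iff₀ (by positivity)]
      nlinarith
    calc T ≤ _ := this
      _ = s / (2 * ε) + N * ε / 2 := by
          rw [Finset.sum_add_distrib, ← Finset.sum_div, Finset.sum_const,
            Finset.card_range, nsmul_eq_mul]
          ring
  have hkey : C * (s / (2 * ε)) ≤ s / (2 * h ^ 2) := by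
    rw [hεdef]
    have hC1 : C + 1 ≠ 0 := by positivity
    have heq : (C + 1) * (s / (2 * ((C + 1) * h ^ 2))) = s / (2 * h ^ 2) := by
      field_simp
    have hx : 0 ≤ s / (2 * ((C + 1) * h ^ 2)) := by positivity
    nlinarith [heq, hx]
  have habs := abs_le.1 h3
  unfold Jh
  rw [hquad]
  have hCT : C * T ≤ s / (2 * h ^ 2) + C * (↑N * ε / 2) := by
    have := mul_le_mul_of_nonneg_left h4 hC0
    rw [mul_add] at this
    nlinarith
  nlinarith [habs.1, habs.2]
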